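/- Let k ≥ 2 and for j = 0, …, k let v_j = (cos(jπ/(k+1)), sin(jπ/(k+1))) ∈ R^2. Then each v_j is a unit vector and the minimum, over all pairs 0 ≤ i < j ≤ k, of |det(v_i, v_j)| equals sin(π/(k+1)). -/

import Mathlib

open Real

lemma sin_mono_aux {a b : ℝ} (ha : 0 ≤ a) (hab : a ≤ b) (hb : b ≤ π - a) :
    Real.sin a ≤ Real.sin b := by
  have ha2 : a ≤ π / 2 := by linarith
  rcases le_or_gt b (π / 2) with h | h
  · exact Real.strictMonoOn_sin.monotoneOn ⟨by linarith [Real.pi_pos], ha2⟩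
      ⟨by linarith [Real.pi_pos], h⟩ hab
  · rw [← Real.sin_pi_sub b]
    exact Real.strictMonoOn_sin.monotoneOn ⟨by linarith [Real.pi_pos], ha2⟩
      ⟨by linarith [Real.pi_pos], by linarith⟩ (by linarith)

lemma det_aux (k : ℕ) (v : Fin (k + 1) → EuclideanSpace ℝ (Fin 2))
    (hv : ∀ j : Fin (k + 1), v j =
      ![Real.cos (j * Real.pi / (k + 1)), Real.sin (j * Real.pi / (k + 1))])
    (i j : Fin (k + 1)) :
    Matrix.det !![v i 0, v j 0; v i 1, v j 1]
      = Real.sin ((j : ℝ) * π / (k + 1) - (i : ℝ) * π / (k + 1)) := by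
  rw [hv i, hv j]
  simp [Matrix.det_fin_two_of, Real.sin_sub]
  ring

theorem stmt17 (k : ℕ) (hk : 2 ≤ k) (v : Fin (k + 1) → EuclideanSpace ℝ (Fin 2))
    (hv : ∀ j : Fin (k + 1), v j =
      ![Real.cos (j * Real.pi / (k + 1)), Real.sin (j * Real.pi / (k + 1))]) :
    (∀ j, ‖v j‖ = 1) ∧
      IsLeast {x : ℝ | ∃ i j : Fin (k + 1), i < j ∧
          x = |Matrix.det !![v i 0, v j 0; v i 1, v j 1]|}
        (Real.sin (Real.pi / (k + 1))) := by
  have hk1 : (0 : ℝ) < (k : ℝ) + 1 := by positivity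
  have hpi := Real.pi_pos
  have hsinpos : 0 < Real.sin (π / (k + 1)) := by
    apply Real.sin_pos_of_pos_of_lt_pi
    · positivity
    · rw [div_lt_iff₀ hk1]
      have hkr : (2:ℝ) ≤ (k:ℝ) := by exact_mod_cast hk
      nlinarith
  constructor
  · intro j
    rw [EuclideanSpace.norm_eq, hv j]
    simp [Fin.sum_univ_two]
  constructor
  · -- membership: i = 0, j = 1
    have h1 : (1 : ℕ) < k + 1 := by omega
    refine ⟨⟨0, by omega⟩, ⟨1, by omega⟩, ?_, ?_⟩
    · exact Fin.mk_lt_mk.mpr (by omega)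
    · rw [det_aux k v hv]
      simp [abs_of_pos hsinpos]
  · rintro x ⟨i, j, hij, rfl⟩
    rw [det_aux k v hv]
    have hijn : (i : ℕ) < (j : ℕ) := hij
    have hd : ((j : ℝ) * π / (k + 1) - (i : ℝ) * π / (k + 1))
        = (((j : ℕ) - (i : ℕ) : ℕ) : ℝ) * π / ((k : ℝ) + 1) := by
      rw [Nat.cast_sub hijn.le]
      ring
    rw [hd]
    set n : ℕ := (j : ℕ) - (i : ℕ) with hn
    have hn1 : 1 ≤ n := by omega
    have hnk : n ≤ k := by omega
    have hnr1 : (1 : ℝ) ≤ (n : ℝ) := by exact_mod_cast hn1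
    have hnrk : (n : ℝ) ≤ (k : ℝ) := by exact_mod_cast hnk
    have hle : Real.sin (π / (k + 1)) ≤ Real.sin ((n : ℝ) * π / (k + 1)) := by
      apply sin_mono_aux (by positivity)
      · rw [div_le_div_iff₀ hk1 hk1]; nlinarith [mul_pos hpi hk1]
      · rw [div_le_iff₀ hk1]
        have : π - π / (k + 1) = ((k : ℝ)) * π / (k + 1) := by
          field_simp; ring
        rw [this]
        have h2 : (↑k * π * ((k:ℝ)+1))/((k:ℝ)+1) = ↑k * π := by field_simp
        rw [div_mul_eq_mul_div, h2]
        nlinarith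
    calc Real.sin (π / (k + 1)) ≤ Real.sin ((n : ℝ) * π / (k + 1)) := hle
      _ ≤ |Real.sin ((n : ℝ) * π / (k + 1))| := le_abs_self _
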